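/- Let $A, B \in \mathbb{R}^{p \times p}$ be symmetric positive semi-definite matrices with principal square roots $A^{1/2}, B^{1/2}$. Then $\|A^{1/2} - B^{1/2}\|_{op} \leq \frac{\|A - B\|_{op}}{\sigma_{\min}(A^{1/2}) + \sigma_{\min}(B^{1/2})}$, provided $\sigma_{\min}(A^{1/2}) + \sigma_{\min}(B^{1/2}) > 0$. -/

import Mathlib

open Matrix BigOperators

/-- Squared Frobenius norm. -/
noncomputable def frobSq {m n : Type*} [Fintype m] [Fintype n] (A : Matrix m n ℝ) : ℝ :=
  ∑ i, ∑ j, (A i j) ^ 2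

/-- Frobenius norm. -/
noncomputable def frob {m n : Type*} [Fintype m] [Fintype n] (A : Matrix m n ℝ) : ℝ :=
  Real.sqrt (frobSq A)

/-- ℓ2 → ℓ2 operator (spectral) norm of a matrix. -/
noncomputable def opNorm {m n : Type*} [Fintype m] [Fintype n] [DecidableEq n]
    (A : Matrix m n ℝ) : ℝ :=
  ‖LinearMap.toContinuousLinearMap (Matrix.toEuclideanLin A)‖

/-- Smallest singular value of a square matrix (infimum of ‖Ax‖ over unit vectors). -/
noncomputable def sigmaMin {n : Type*} [Fintype n] [DecidableEq n] (A : Matrix n n ℝ) : ℝ :=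
  ⨅ x : {x : EuclideanSpace ℝ n // ‖x‖ = 1}, ‖Matrix.toEuclideanLin A x‖

/-- Euclidean norm of a vector. -/
noncomputable def enorm {n : Type*} [Fintype n] (v : n → ℝ) : ℝ :=
  Real.sqrt (∑ i, (v i) ^ 2)

/-- Euclidean norm of row `j` of a matrix. -/
noncomputable def rowNorm {m n : Type*} [Fintype m] [Fintype n] (A : Matrix m n ℝ) (j : m) : ℝ :=
  Real.sqrt (∑ i, (A j i) ^ 2)

section Helpers

variable {p : ℕ}

private lemma sq_le_imp' {a b : ℝ} (hb : 0 ≤ b) (h : a ^ 2 ≤ b ^ 2) (ha : 0 ≤ a) : a ≤ b := by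
  nlinarith

private lemma inner_expand' (b : OrthonormalBasis (Fin p) ℝ (EuclideanSpace ℝ (Fin p)))
    (y z : EuclideanSpace ℝ (Fin p)) :
    (inner ℝ y z : ℝ) = ∑ j, b.repr y j * b.repr z j := by
  rw [← b.sum_inner_mul_inner y z]
  exact Finset.sum_congr rfl fun j _ => by
    rw [OrthonormalBasis.repr_apply_apply, OrthonormalBasis.repr_apply_apply, real_inner_comm]

private lemma repr_toEuclideanLin' (M : Matrix (Fin p) (Fin p) ℝ) (hM : M.IsHermitian)
    (y : EuclideanSpace ℝ (Fin p)) (j : Fin p) :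
    hM.eigenvectorBasis.repr (Matrix.toEuclideanLin M y) j
      = hM.eigenvalues j * hM.eigenvectorBasis.repr y j := by
  have hsym := (Matrix.isHermitian_iff_isSymmetric.mp hM)
  have hb : Matrix.toEuclideanLin M (hM.eigenvectorBasis j)
      = hM.eigenvalues j • hM.eigenvectorBasis j := congrArg (WithLp.toLp 2) (hM.mulVec_eigenvectorBasis j)
  rw [OrthonormalBasis.repr_apply_apply, OrthonormalBasis.repr_apply_apply,
    ← hsym (hM.eigenvectorBasis j) y, hb, inner_smul_left]
  simp

private lemma opNorm_le_of_eig' (M : Matrix (Fin p) (Fin p) ℝ) (hM : M.IsHermitian)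
    (t : ℝ) (ht0 : 0 ≤ t) (ht : ∀ j, |hM.eigenvalues j| ≤ t) :
    opNorm M ≤ t := by
  apply ContinuousLinearMap.opNorm_le_bound _ ht0
  intro x
  show ‖Matrix.toEuclideanLin M x‖ ≤ t * ‖x‖
  have h1 : ‖Matrix.toEuclideanLin M x‖ ^ 2 ≤ (t * ‖x‖) ^ 2 := by
    have hexp : ‖Matrix.toEuclideanLin M x‖ ^ 2
        = ∑ j, (hM.eigenvalues j * hM.eigenvectorBasis.repr x j) ^ 2 := by
      rw [← real_inner_self_eq_norm_sq, inner_expand' hM.eigenvectorBasis]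
      refine Finset.sum_congr rfl fun j _ => ?_
      rw [repr_toEuclideanLin' M hM x j]; ring
    rw [hexp, mul_pow, ← real_inner_self_eq_norm_sq,
      inner_expand' hM.eigenvectorBasis, Finset.mul_sum]
    refine Finset.sum_le_sum fun j _ => ?_
    rw [mul_pow, ← sq]
    have h2 : hM.eigenvalues j ^ 2 ≤ t ^ 2 := by
      nlinarith [sq_abs (hM.eigenvalues j),
        mul_self_le_mul_self (abs_nonneg (hM.eigenvalues j)) (ht j)]
    exact mul_le_mul_of_nonneg_right h2 (sq_nonneg _)
  exact sq_le_imp' (mul_nonneg ht0 (norm_nonneg _)) h1 (norm_nonneg _)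

private lemma sigmaMin_le_inner' (hp : 0 < p) (M : Matrix (Fin p) (Fin p) ℝ)
    (hM : M.PosSemidef) (x : EuclideanSpace ℝ (Fin p)) (hx : ‖x‖ = 1) :
    sigmaMin M ≤ (inner ℝ x (Matrix.toEuclideanLin M x) : ℝ) := by
  haveI : Nonempty (Fin p) := ⟨⟨0, hp⟩⟩
  set hH := hM.1 with hHdef
  obtain ⟨j0, -, hj0⟩ := Finset.exists_min_image Finset.univ hH.eigenvalues
    ⟨⟨0, hp⟩, Finset.mem_univ _⟩
  set μ := hH.eigenvalues j0 with hμ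
  have hμ0 : 0 ≤ μ := hM.eigenvalues_nonneg j0
  have hb1 : ‖(hH.eigenvectorBasis j0 : EuclideanSpace ℝ (Fin p))‖ = 1 :=
    hH.eigenvectorBasis.orthonormal.1 j0
  have step1 : sigmaMin M ≤ μ := by
    have hbdd : BddBelow (Set.range fun x : {x : EuclideanSpace ℝ (Fin p) // ‖x‖ = 1} =>
        ‖Matrix.toEuclideanLin M x‖) := ⟨0, by rintro _ ⟨y, rfl⟩; exact norm_nonneg _⟩
    have h := ciInf_le hbdd (⟨hH.eigenvectorBasis j0, hb1⟩ :
      {x : EuclideanSpace ℝ (Fin p) // ‖x‖ = 1})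
    refine h.trans_eq ?_
    have hb : Matrix.toEuclideanLin M (hH.eigenvectorBasis j0)
        = μ • hH.eigenvectorBasis j0 := congrArg (WithLp.toLp 2) (hH.mulVec_eigenvectorBasis j0)
    rw [hb, norm_smul, hb1, Real.norm_eq_abs, abs_of_nonneg hμ0, mul_one]
  refine step1.trans ?_
  have hsum : ∑ j, hH.eigenvectorBasis.repr x j * hH.eigenvectorBasis.repr x j = 1 := by
    rw [← inner_expand' hH.eigenvectorBasis x x, real_inner_self_eq_norm_sq, hx]; norm_num
  rw [inner_expand' hH.eigenvectorBasis]
  calc μ = ∑ j, μ * (hH.eigenvectorBasis.repr x j * hH.eigenvectorBasis.repr x j) := by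
        rw [← Finset.mul_sum, hsum, mul_one]
    _ ≤ _ := by
        refine Finset.sum_le_sum fun j _ => ?_
        rw [repr_toEuclideanLin' M hH x j]
        have h3 := hj0 j (Finset.mem_univ j)
        nlinarith [mul_self_nonneg (hH.eigenvectorBasis.repr x j)]

private lemma opNorm_neg' (M : Matrix (Fin p) (Fin p) ℝ) : opNorm (-M) = opNorm M := by
  unfold opNorm
  rw [map_neg, map_neg, norm_neg]

private lemma key' (hp : 0 < p) (RA RB : Matrix (Fin p) (Fin p) ℝ)
    (hRA : RA.PosSemidef) (hRB : RB.PosSemidef)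
    (x : EuclideanSpace ℝ (Fin p)) (hx : ‖x‖ = 1) (t : ℝ) (ht : 0 ≤ t)
    (hEx : Matrix.toEuclideanLin (RA - RB) x = t • x) :
    t * (sigmaMin RA + sigmaMin RB) ≤ opNorm (RA * RA - RB * RB) := by
  have hmul : ∀ (M N : Matrix (Fin p) (Fin p) ℝ) (y : EuclideanSpace ℝ (Fin p)),
      Matrix.toEuclideanLin (M * N) y = Matrix.toEuclideanLin M (Matrix.toEuclideanLin N y) := by
    intro M N y
    show WithLp.toLp 2 ((M * N).mulVec y.ofLp) = WithLp.toLp 2 (M.mulVec (N.mulVec y.ofLp))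
    rw [Matrix.mulVec_mulVec]
  have hd : RA * RA - RB * RB = RA * (RA - RB) + (RA - RB) * RB := by noncomm_ring
  have hE : (RA - RB).IsHermitian := hRA.1.sub hRB.1
  have hsymE := Matrix.isHermitian_iff_isSymmetric.mp hE
  have hs : (inner ℝ x (Matrix.toEuclideanLin (RA * RA - RB * RB) x) : ℝ)
      = t * ((inner ℝ x (Matrix.toEuclideanLin RA x) : ℝ)
            + (inner ℝ x (Matrix.toEuclideanLin RB x) : ℝ)) := by
    rw [hd, map_add]
    simp only [LinearMap.add_apply, inner_add_right]
    rw [hmul, hmul, hEx, LinearMap.map_smul _ t x, real_inner_smul_right,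
      ← hsymE x (Matrix.toEuclideanLin RB x), hEx, real_inner_smul_left]
    ring
  have hub : (inner ℝ x (Matrix.toEuclideanLin (RA * RA - RB * RB) x) : ℝ)
      ≤ opNorm (RA * RA - RB * RB) := by
    have h1 := real_inner_le_norm x (Matrix.toEuclideanLin (RA * RA - RB * RB) x)
    have h2 : ‖Matrix.toEuclideanLin (RA * RA - RB * RB) x‖
        ≤ opNorm (RA * RA - RB * RB) * ‖x‖ :=
      ContinuousLinearMap.le_opNorm
        (LinearMap.toContinuousLinearMap (Matrix.toEuclideanLin (RA * RA - RB * RB))) x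
    rw [hx] at h1 h2
    simpa using h1.trans (by simpa using h2)
  have hlb : t * (sigmaMin RA + sigmaMin RB)
      ≤ (inner ℝ x (Matrix.toEuclideanLin (RA * RA - RB * RB) x) : ℝ) := by
    rw [hs]
    refine mul_le_mul_of_nonneg_left ?_ ht
    exact add_le_add (sigmaMin_le_inner' hp RA hRA x hx) (sigmaMin_le_inner' hp RB hRB x hx)
  exact hlb.trans hub

end Helpers

/-- perturbation bound for principal PSD square roots in operator norm. -/
theorem stmt1 (p : ℕ) (A B RA RB : Matrix (Fin p) (Fin p) ℝ)
    (hA : A.PosSemidef) (hB : B.PosSemidef)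
    (hRA : RA.PosSemidef) (hRB : RB.PosSemidef)
    (hRA2 : RA * RA = A) (hRB2 : RB * RB = B)
    (hpos : 0 < sigmaMin RA + sigmaMin RB) :
    opNorm (RA - RB) ≤ opNorm (A - B) / (sigmaMin RA + sigmaMin RB) := by
  rcases Nat.eq_zero_or_pos p with hp | hp
  · subst hp
    have hzero : RA - RB = 0 := by ext i j; exact i.elim0
    rw [hzero]
    have : opNorm (0 : Matrix (Fin 0) (Fin 0) ℝ) = 0 := by
      unfold opNorm; rw [map_zero, map_zero, norm_zero]
    rw [this]
    have h0 : (0:ℝ) ≤ opNorm (A - B) := norm_nonneg _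
    positivity
  · subst hRA2; subst hRB2
    have hE : (RA - RB).IsHermitian := hRA.1.sub hRB.1
    haveI : Nonempty (Fin p) := ⟨⟨0, hp⟩⟩
    obtain ⟨i, -, hi⟩ := Finset.exists_max_image Finset.univ
      (fun j => |hE.eigenvalues j|) ⟨⟨0, hp⟩, Finset.mem_univ _⟩
    set t := |hE.eigenvalues i| with htdef
    have hOpE : opNorm (RA - RB) ≤ t :=
      opNorm_le_of_eig' _ hE t (abs_nonneg _) (fun j => hi j (Finset.mem_univ j))
    have hx1 : ‖(hE.eigenvectorBasis i : EuclideanSpace ℝ (Fin p))‖ = 1 :=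
      hE.eigenvectorBasis.orthonormal.1 i
    have hEx : Matrix.toEuclideanLin (RA - RB) (hE.eigenvectorBasis i)
        = hE.eigenvalues i • hE.eigenvectorBasis i := congrArg (WithLp.toLp 2) (hE.mulVec_eigenvectorBasis i)
    have hkey : t * (sigmaMin RA + sigmaMin RB) ≤ opNorm (RA * RA - RB * RB) := by
      rcases le_or_gt 0 (hE.eigenvalues i) with hlam | hlam
      · rw [htdef, abs_of_nonneg hlam]
        exact key' hp RA RB hRA hRB _ hx1 _ hlam hEx
      · have hEx' : Matrix.toEuclideanLin (RB - RA) (hE.eigenvectorBasis i)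
            = (-hE.eigenvalues i) • hE.eigenvectorBasis i := by
          have : RB - RA = -(RA - RB) := (neg_sub RA RB).symm
          rw [this, map_neg, LinearMap.neg_apply, hEx, neg_smul]
        have h := key' hp RB RA hRB hRA _ hx1 _ (by linarith) hEx'
        rw [htdef, abs_of_neg hlam]
        have hneg : RB * RB - RA * RA = -(RA * RA - RB * RB) := (neg_sub _ _).symm
        rw [hneg, opNorm_neg'] at h
        linarith [h, mul_le_mul_of_nonneg_left (le_of_eq (add_comm (sigmaMin RB) (sigmaMin RA)))
          (neg_nonneg.mpr hlam.le)]
    rw [le_div_iff₀ hpos]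
    calc opNorm (RA - RB) * (sigmaMin RA + sigmaMin RB)
        ≤ t * (sigmaMin RA + sigmaMin RB) :=
          mul_le_mul_of_nonneg_right hOpE hpos.le
      _ ≤ opNorm (RA * RA - RB * RB) := hkey
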